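/- arXiv:2407.10571 — 4 statements merged into one kernel-verified Lean document; each statement's English description precedes it below -/
import Mathlib

section
/- For any graph G, spi(G) equals the least integer ℓ such that the graph G ⊗ (ℓ−1), obtained from G by adding ℓ−1 new vertices each adjacent to all vertices of G, has a spanning spider whose center belongs to V(G). -/
open SimpleGraph

variable {V : Type*}

/-- `T` is a spanning tree of `G`. -/
def IsSpanningTree (G T : SimpleGraph V) : Prop := T ≤ G ∧ T.IsTree

/-- The set of branch vertices (degree at least 3) of a graph/tree `T`. -/
def branchSet (T : SimpleGraph V) : Set V := {v | 3 ≤ (T.neighborSet v).ncard}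

/-- `b(G)`: minimum number of branch vertices over all spanning trees of `G`. -/
noncomputable def bNum (G : SimpleGraph V) : ℕ :=
  sInf {k | ∃ T : SimpleGraph V, IsSpanningTree G T ∧ (branchSet T).ncard = k}

/-- A subgraph which is a path: connected, acyclic, all degrees at most 2. -/
def IsPathSub {G : SimpleGraph V} (S : G.Subgraph) : Prop :=
  S.Connected ∧ S.coe.IsAcyclic ∧ ∀ v, (S.neighborSet v).ncard ≤ 2

/-- A subgraph which is a spider with center `c`: connected, acyclic, and every
vertex of degree at least 3 equals `c`. -/
def IsSpiderSub {G : SimpleGraph V} (S : G.Subgraph) (c : V) : Prop :=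
  S.Connected ∧ S.coe.IsAcyclic ∧ c ∈ S.verts ∧
    ∀ v, 3 ≤ (S.neighborSet v).ncard → v = c

/-- `G` has a partition of its vertex set into `p` vertex-disjoint paths. -/
def HasPathPartition (G : SimpleGraph V) (p : ℕ) : Prop :=
  ∃ F : Fin p → G.Subgraph, (∀ i, IsPathSub (F i)) ∧ ∀ v, ∃! i, v ∈ (F i).verts

/-- `G` has a path-spider cover with `p` parts: one spider with center `c`
and `p - 1` vertex-disjoint paths, partitioning `V(G)`. -/
def HasPathSpiderCoverC (G : SimpleGraph V) (p : ℕ) (c : V) : Prop :=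
  ∃ (hp : 0 < p) (F : Fin p → G.Subgraph),
    IsSpiderSub (F ⟨0, hp⟩) c ∧ (∀ i, i ≠ ⟨0, hp⟩ → IsPathSub (F i)) ∧
    ∀ v, ∃! i, v ∈ (F i).verts

/-- `ham(G)`: least number of paths in a partition of `G` into paths. -/
noncomputable def hamNum (G : SimpleGraph V) : ℕ := sInf {p | HasPathPartition G p}

/-- `spi(G)`: least `p` such that `G` has a path-spider cover with one spider
and `p - 1` paths. -/
noncomputable def spiNum (G : SimpleGraph V) : ℕ :=
  sInf {p | ∃ c, HasPathSpiderCoverC G p c}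

/-- `G ⊗ k`: the graph obtained from `G` by adding `k` new pairwise non-adjacent
vertices, each adjacent to every vertex of `G`. -/
def addUniversal (G : SimpleGraph V) (k : ℕ) : SimpleGraph (V ⊕ Fin k) :=
  SimpleGraph.fromRel (fun x y => match x, y with
    | Sum.inl u, Sum.inl v => G.Adj u v
    | Sum.inl _, Sum.inr _ => True
    | _, _ => False)

/-- The branch cost of a tree `T`: the sum of the weights of its branch vertices. -/
noncomputable def treeCost (T : SimpleGraph V) (w : V → ℕ) : ℕ :=
  ∑ᶠ v ∈ branchSet T, w v

/-- a vertex reachable to a different vertex is in the support -/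
lemma mem_support_of_reachable_ne {H : SimpleGraph W} {x y : W}
    (h : H.Reachable x y) (hne : x ≠ y) : x ∈ H.support := by
  obtain ⟨p⟩ := h
  cases p with
  | nil => exact absurd rfl hne
  | cons h q => exact ⟨_, h⟩

lemma not_reachable_of_not_mem_support {H : SimpleGraph W} {x y : W}
    (hx : x ∉ H.support) (hne : x ≠ y) : ¬ H.Reachable x y :=
  fun h => hx (mem_support_of_reachable_ne h hne)

lemma support_sup (H K : SimpleGraph W) : (H ⊔ K).support ⊆ H.support ∪ K.support := by
  rintro x ⟨w, hw | hw⟩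
  · exact Or.inl ⟨w, hw⟩
  · exact Or.inr ⟨w, hw⟩

lemma support_fromEdgeSet_pair {a b x : W}
    (hx : x ∈ (SimpleGraph.fromEdgeSet {s(a,b)}).support) : x = a ∨ x = b := by
  obtain ⟨w, hw⟩ := hx
  replace hw : (SimpleGraph.fromEdgeSet {s(a,b)}).Adj x w := hw
  rw [fromEdgeSet_adj] at hw
  obtain ⟨h1, h2⟩ := hw
  rw [Set.mem_singleton_iff, Sym2.eq_iff] at h1
  rcases h1 with ⟨rfl, rfl⟩ | ⟨rfl, rfl⟩
  · exact Or.inl rfl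
  · exact Or.inr rfl


/-- reachability in a sup of graphs with disjoint supports -/
lemma reachable_sup_of_disjoint_support {H K : SimpleGraph W}
    (hd : Disjoint H.support K.support) {x y : W}
    (h : (H ⊔ K).Reachable x y) (hne : x ≠ y) : H.Reachable x y ∨ K.Reachable x y := by
  have hd' : ∀ z, z ∈ H.support → z ∈ K.support → False :=
    fun z h1 h2 => Set.disjoint_left.mp hd h1 h2
  obtain ⟨p⟩ := h
  induction p with
  | nil => exact absurd rfl hne
  | @cons x b y h q ih =>
    rcases eq_or_ne b y with rfl | hby
    · rcases h with h | h
      · exact Or.inl h.reachable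
      · exact Or.inr h.reachable
    · rcases ih hby with hr | hr
      · rcases h with h | h
        · exact Or.inl (h.reachable.trans hr)
        · exact absurd (hd' b (mem_support_of_reachable_ne hr hby) ⟨_, h.symm⟩) not_false
      · rcases h with h | h
        · exact absurd (hd' b ⟨_, h.symm⟩ (mem_support_of_reachable_ne hr hby)) not_false
        · exact Or.inr (h.reachable.trans hr)

lemma edges_or_of_disjoint_support {H K : SimpleGraph W}
    (hd : Disjoint H.support K.support) :
    ∀ {x y : W} (p : (H ⊔ K).Walk x y),
      (∀ e ∈ p.edges, e ∈ H.edgeSet) ∨ (∀ e ∈ p.edges, e ∈ K.edgeSet) := by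
  have hd' : ∀ z, z ∈ H.support → z ∈ K.support → False :=
    fun z h1 h2 => Set.disjoint_left.mp hd h1 h2
  intro x y p
  induction p with
  | nil => exact Or.inl (by simp)
  | @cons x b y h q ih =>
    rcases ih with ihh | ihk
    · rcases h with h | h
      · refine Or.inl ?_
        intro e he
        rw [SimpleGraph.Walk.edges_cons, List.mem_cons] at he
        rcases he with rfl | he
        · exact h
        · exact ihh e he
      · cases q with
        | nil =>
          refine Or.inr ?_
          intro e he
          rw [SimpleGraph.Walk.edges_cons, List.mem_cons] at he
          rcases he with rfl | he
          · exact h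
          · simp at he
        | @cons b c y h' q' =>
          have hH : s(b,c) ∈ H.edgeSet := ihh _ (by simp)
          exact absurd (hd' b ⟨c, hH⟩ ⟨x, h.symm⟩) not_false
    · rcases h with h | h
      · cases q with
        | nil =>
          refine Or.inl ?_
          intro e he
          rw [SimpleGraph.Walk.edges_cons, List.mem_cons] at he
          rcases he with rfl | he
          · exact h
          · simp at he
        | @cons b c y h' q' =>
          have hK : s(b,c) ∈ K.edgeSet := ihk _ (by simp)
          exact absurd (hd' b ⟨x, h.symm⟩ ⟨c, hK⟩) not_false
      · refine Or.inr ?_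
        intro e he
        rw [SimpleGraph.Walk.edges_cons, List.mem_cons] at he
        rcases he with rfl | he
        · exact h
        · exact ihk e he

lemma acyclic_sup_of_disjoint_support {H K : SimpleGraph W}
    (hd : Disjoint H.support K.support)
    (hH : H.IsAcyclic) (hK : K.IsAcyclic) : (H ⊔ K).IsAcyclic := by
  intro a p hp
  rcases edges_or_of_disjoint_support hd p with h | h
  · exact hH (p.transfer H h) (hp.transfer h)
  · exact hK (p.transfer K h) (hp.transfer h)

/-- adding an edge between two non-reachable vertices preserves acyclicity -/
lemma acyclic_sup_edge {H : SimpleGraph W} {a b : W} (hH : H.IsAcyclic)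
    (hab : a ≠ b) (hr : ¬ H.Reachable a b) :
    (H ⊔ SimpleGraph.fromEdgeSet {s(a,b)}).IsAcyclic := by
  classical
  intro x p hp
  by_cases he : s(a,b) ∈ p.edges
  · -- both a and b on the cycle; split the cycle at a
    have ha : a ∈ p.support := p.fst_mem_support_of_mem_edges he
    have hq := hp.rotate ha
    set q := p.rotate a ha with hqdef
    have heq : s(a,b) ∈ q.edges := (p.rotate_edges a ha).mem_iff.mpr he
    have hb : b ∈ q.support := q.snd_mem_support_of_mem_edges heq
    have hspec := q.take_spec hb
    have hnodup : q.edges.Nodup := hq.edges_nodup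
    have hedges : q.edges = (q.takeUntil b hb).edges ++ (q.dropUntil b hb).edges := by
      conv_lhs => rw [← hspec]
      exact SimpleGraph.Walk.edges_append _ _
    have hmem : s(a,b) ∈ (q.takeUntil b hb).edges ∨ s(a,b) ∈ (q.dropUntil b hb).edges := by
      rw [hedges, List.mem_append] at heq; exact heq
    have hnotboth : ¬ (s(a,b) ∈ (q.takeUntil b hb).edges ∧ s(a,b) ∈ (q.dropUntil b hb).edges) := by
      rintro ⟨h1, h2⟩
      rw [hedges] at hnodup
      exact (List.disjoint_of_nodup_append hnodup) h1 h2
    -- transfer the avoiding piece to H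
    have htrans : ∀ {u v : W} (r : (H ⊔ SimpleGraph.fromEdgeSet {s(a,b)}).Walk u v),
        s(a,b) ∉ r.edges → H.Reachable u v := by
      intro u v r hr'
      have hall : ∀ e ∈ r.edges, e ∈ H.edgeSet := by
        intro e hep
        have := r.edges_subset_edgeSet hep
        rw [SimpleGraph.edgeSet_sup] at this
        rcases this with h | h
        · exact h
        · exfalso
          rw [SimpleGraph.edgeSet_fromEdgeSet] at h
          obtain ⟨h1, -⟩ := h
          rw [Set.mem_singleton_iff] at h1
          exact hr' (h1 ▸ hep)
      exact ⟨r.transfer H hall⟩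
    rcases hmem with hm | hm
    · have : s(a,b) ∉ (q.dropUntil b hb).edges := fun h2 => hnotboth ⟨hm, h2⟩
      exact hr (htrans _ this).symm
    · have : s(a,b) ∉ (q.takeUntil b hb).edges := fun h2 => hnotboth ⟨h2, hm⟩
      exact hr (htrans _ this)
  · -- cycle avoids the new edge: lives in H
    have hall : ∀ e ∈ p.edges, e ∈ H.edgeSet := by
      intro e hep
      have := p.edges_subset_edgeSet hep
      rw [SimpleGraph.edgeSet_sup] at this
      rcases this with h | h
      · exact h
      · exfalso
        rw [SimpleGraph.edgeSet_fromEdgeSet] at h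
        obtain ⟨h1, -⟩ := h
        rw [Set.mem_singleton_iff] at h1
        exact he (h1 ▸ hep)
    exact hH (p.transfer H hall) (hp.transfer hall)

section Pullback
variable {α β : Type*} {H : SimpleGraph α} {H' : SimpleGraph β} {f : α → β}

lemma walk_pullback (hinj : Function.Injective f)
    (hadj2 : ∀ u v, H.Adj u v → H'.Adj (f u) (f v))
    (hadj : ∀ x y, H'.Adj x y → ∃ u v, H.Adj u v ∧ x = f u ∧ y = f v) :
    ∀ {s t : β} (p : H'.Walk s t) (x : α) (hs : s = f x),
      ∃ (y : α) (ht : t = f y) (q : H.Walk x y),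
        q.map ⟨f, fun h => hadj2 _ _ h⟩ = p.copy hs ht := by
  intro s t p
  induction p with
  | nil =>
    intro x hs
    subst hs
    exact ⟨x, rfl, SimpleGraph.Walk.nil, by simp⟩
  | @cons s b t h p' ih =>
    intro x hs
    subst hs
    obtain ⟨u, v, huv, hsu, hbv⟩ := hadj _ _ h
    obtain rfl : u = x := hinj hsu.symm
    subst hbv
    obtain ⟨y, ht, q', hq'⟩ := ih v rfl
    refine ⟨y, ht, SimpleGraph.Walk.cons huv q', ?_⟩
    subst ht
    simp only [SimpleGraph.Walk.map_cons, SimpleGraph.Walk.copy_rfl_rfl] at *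
    rw [hq']

lemma acyclic_of_pullback (hinj : Function.Injective f)
    (hadj2 : ∀ u v, H.Adj u v → H'.Adj (f u) (f v))
    (hadj : ∀ x y, H'.Adj x y → ∃ u v, H.Adj u v ∧ x = f u ∧ y = f v)
    (hH : H.IsAcyclic) : H'.IsAcyclic := by
  intro a p hp
  have hne := hp.ne_nil
  have hfu : ∃ u : α, a = f u := by
    cases p with
    | nil => exact absurd rfl hne
    | cons h q =>
      obtain ⟨u, v, -, h1, -⟩ := hadj _ _ h
      exact ⟨u, h1⟩
  obtain ⟨u, rfl⟩ := hfu
  obtain ⟨y, ht, q, hq⟩ := walk_pullback hinj hadj2 hadj p u rfl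
  obtain rfl : u = y := hinj ht
  rw [SimpleGraph.Walk.copy_rfl_rfl] at hq
  refine hH q ?_
  have := hq ▸ hp
  exact (SimpleGraph.Walk.map_isCycle_iff_of_injective hinj).mp this

end Pullback

section Leaf
variable {α : Type*}

lemma dist_step {H : SimpleGraph α} (hc : H.Connected) {x y : α} (hne : x ≠ y) :
    ∃ z, H.Adj x z ∧ H.dist z y + 1 = H.dist x y := by
  obtain ⟨p, hp⟩ := (hc x y).exists_walk_length_eq_dist
  cases p with
  | nil => exact absurd rfl hne
  | @cons x z y h q =>
    refine ⟨z, h, ?_⟩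
    rw [SimpleGraph.Walk.length_cons] at hp
    have h1 : H.dist z y ≤ H.dist x y - 1 := by
      have := SimpleGraph.dist_le q
      omega
    have h2 : H.dist x y ≤ H.dist z y + 1 := by
      have h3 := hc.dist_triangle (u := x) (v := z) (w := y)
      have h4 : H.dist x z ≤ 1 := by
        have := SimpleGraph.dist_le (SimpleGraph.Walk.cons h SimpleGraph.Walk.nil)
        simpa using this
      omega
    omega

lemma exists_leaf [Fintype α] [Nonempty α] {H : SimpleGraph α}
    (hc : H.Connected) (ha : H.IsAcyclic) : ∃ x, (H.neighborSet x).ncard ≤ 1 := by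
  classical
  obtain ⟨r⟩ := ‹Nonempty α›
  obtain ⟨x, -, hmax⟩ := Finset.exists_max_image Finset.univ (fun v => H.dist v r)
    ⟨r, Finset.mem_univ r⟩
  refine ⟨x, (Set.ncard_le_one_iff (Set.toFinite _)).mpr ?_⟩
  intro y z hy hz
  replace hy : H.Adj x y := hy
  replace hz : H.Adj x z := hz
  by_contra hne
  -- for each neighbor w, build a path from x to r starting with w
  have key : ∀ w : α, H.Adj x w → ∃ (b : H.Walk w r), b.IsPath ∧ x ∉ b.support := by
    intro w hw
    obtain ⟨q, hq⟩ := (hc w r).exists_walk_length_eq_dist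
    have hbp : q.bypass.IsPath := SimpleGraph.Walk.bypass_isPath q
    have hblen : q.bypass.length = H.dist w r := by
      have h1 := SimpleGraph.Walk.length_bypass_le q
      have h2 := SimpleGraph.dist_le q.bypass
      omega
    refine ⟨q.bypass, hbp, ?_⟩
    intro hx
    -- the suffix from x would be a strictly shorter walk to r than dist x r
    have hxw : x ≠ w := H.ne_of_adj hw
    have hspec := q.bypass.take_spec hx
    have hlen : (q.bypass.takeUntil x hx).length + (q.bypass.dropUntil x hx).length
        = q.bypass.length := by
      have := congr_arg SimpleGraph.Walk.length hspec
      rw [SimpleGraph.Walk.length_append] at this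
      omega
    have htake : 0 < (q.bypass.takeUntil x hx).length := by
      rcases Nat.eq_zero_or_pos (q.bypass.takeUntil x hx).length with h | h
      · exact absurd (SimpleGraph.Walk.eq_of_length_eq_zero h) hxw.symm
      · exact h
    have hdrop := SimpleGraph.dist_le (q.bypass.dropUntil x hx)
    have hwr : H.dist w r ≤ H.dist x r := hmax w (Finset.mem_univ w)
    omega
  obtain ⟨by', hby, hxy⟩ := key y hy
  obtain ⟨bz, hbz, hxz⟩ := key z hz
  have hp1 : (SimpleGraph.Walk.cons hy by').IsPath := hby.cons hxy
  have hp2 : (SimpleGraph.Walk.cons hz bz).IsPath := hbz.cons hxz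
  have := ha.path_unique ⟨SimpleGraph.Walk.cons hy by', hp1⟩ ⟨SimpleGraph.Walk.cons hz bz, hp2⟩
  have hsupp := congr_arg (fun p : H.Path x r => p.val.support) this
  simp only [SimpleGraph.Walk.support_cons] at hsupp
  rw [by'.support_eq_cons, bz.support_eq_cons] at hsupp
  exact hne (List.cons.inj (List.cons.inj hsupp).2).1

end Leaf

section LiftSub
variable {V : Type*} {k : ℕ} {G : SimpleGraph V}

/-- single edge graph -/
abbrev eg {W : Type*} (a b : W) : SimpleGraph W := SimpleGraph.fromEdgeSet {s(a,b)}

lemma eg_adj {W : Type*} {a b x y : W} (hab : a ≠ b) :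
    (eg a b).Adj x y ↔ (x = a ∧ y = b) ∨ (x = b ∧ y = a) := by
  rw [fromEdgeSet_adj]
  constructor
  · rintro ⟨h1, h2⟩
    rw [Set.mem_singleton_iff, Sym2.eq_iff] at h1
    exact h1
  · rintro (⟨rfl, rfl⟩ | ⟨rfl, rfl⟩)
    · exact ⟨by simp, hab⟩
    · exact ⟨by rw [Set.mem_singleton_iff, Sym2.eq_swap], hab.symm⟩

/-- lift of a subgraph of `G` to the sum type -/
def liftSub (S : G.Subgraph) : SimpleGraph (V ⊕ Fin k) where
  Adj x y := ∃ u v, S.Adj u v ∧ x = Sum.inl u ∧ y = Sum.inl v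
  symm := ⟨by rintro x y ⟨u, v, h, rfl, rfl⟩; exact ⟨v, u, h.symm, rfl, rfl⟩⟩
  loopless := ⟨by rintro x ⟨u, v, h, rfl, h2⟩; rw [Sum.inl.injEq] at h2; exact h.ne h2⟩

lemma liftSub_adj {S : G.Subgraph} {x y : V ⊕ Fin k} :
    (liftSub S).Adj x y ↔ ∃ u v, S.Adj u v ∧ x = Sum.inl u ∧ y = Sum.inl v := Iff.rfl

lemma liftSub_support {S : G.Subgraph} :
    (liftSub (k := k) S).support ⊆ Sum.inl '' S.verts := by
  rintro x ⟨w, u, v, h, rfl, rfl⟩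
  exact ⟨u, h.fst_mem, rfl⟩

lemma liftSub_acyclic {S : G.Subgraph} (h : S.coe.IsAcyclic) :
    (liftSub (k := k) S).IsAcyclic := by
  refine acyclic_of_pullback (H := S.coe) (f := fun x => Sum.inl x.val) ?_ ?_ ?_ h
  · intro a b hab
    exact Subtype.val_injective (Sum.inl_injective hab)
  · intro u v huv; exact ⟨u.val, v.val, huv, rfl, rfl⟩
  · rintro x y ⟨u, v, h', rfl, rfl⟩
    exact ⟨⟨u, h'.fst_mem⟩, ⟨v, h'.snd_mem⟩, h', rfl, rfl⟩

lemma liftSub_reachable {S : G.Subgraph} (hc : S.Connected) {u v : V}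
    (hu : u ∈ S.verts) (hv : v ∈ S.verts) :
    (liftSub (k := k) S).Reachable (Sum.inl u) (Sum.inl v) := by
  have hr : S.coe.Reachable ⟨u, hu⟩ ⟨v, hv⟩ := hc.coe ⟨u, hu⟩ ⟨v, hv⟩
  exact hr.map (⟨fun x => Sum.inl x.val, fun {a b} hab => ⟨a.val, b.val, hab, rfl, rfl⟩⟩ :
    S.coe →g liftSub (k := k) S)

lemma addUniversal_adj_inl {u v : V} :
    (addUniversal G k).Adj (Sum.inl u) (Sum.inl v) ↔ G.Adj u v := by
  rw [addUniversal, fromRel_adj]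
  constructor
  · rintro ⟨-, h | h⟩
    · exact h
    · exact h.symm
  · intro h
    exact ⟨by simp [h.ne], Or.inl h⟩

lemma addUniversal_adj_inr {u : V} {j : Fin k} :
    (addUniversal G k).Adj (Sum.inl u) (Sum.inr j) := by
  rw [addUniversal, fromRel_adj]
  exact ⟨by simp, Or.inl trivial⟩

lemma liftSub_le {S : G.Subgraph} : liftSub (k := k) S ≤ addUniversal G k := by
  rintro x y ⟨u, v, h, rfl, rfl⟩
  exact addUniversal_adj_inl.mpr (S.adj_sub h)

lemma subgraph_exists_leaf [Fintype V] {S : G.Subgraph} (hc : S.Connected)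
    (ha : S.coe.IsAcyclic) : ∃ v ∈ S.verts, (S.neighborSet v).ncard ≤ 1 := by
  classical
  have hf : Fintype ↥S.verts := Fintype.ofFinite _
  have hn : Nonempty ↥S.verts := hc.nonempty.to_subtype
  obtain ⟨x, hx⟩ := exists_leaf hc.coe ha
  refine ⟨x.val, x.prop, ?_⟩
  have heq : S.neighborSet x.val = Subtype.val '' (S.coe.neighborSet x) := by
    ext w
    constructor
    · intro hw
      exact ⟨⟨w, (Subgraph.Adj.snd_mem hw)⟩, by simpa using hw, rfl⟩
    · rintro ⟨w', hw', rfl⟩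
      simpa using hw'
  rw [heq, Set.ncard_image_of_injective _ Subtype.val_injective]
  exact hx

end LiftSub

/-- iterative construction of the spanning spider -/
def buildT {V : Type*} {G : SimpleGraph V} {k : ℕ} (S0 : G.Subgraph)
    (P : Fin k → G.Subgraph) (c : V) (e : Fin k → V) : ℕ → SimpleGraph (V ⊕ Fin k)
  | 0 => liftSub S0
  | m + 1 =>
    if h : m < k then
      ((buildT S0 P c e m ⊔ eg (Sum.inr ⟨m, h⟩) (Sum.inl c)) ⊔ liftSub (P ⟨m, h⟩)) ⊔
        eg (Sum.inr ⟨m, h⟩) (Sum.inl (e ⟨m, h⟩))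
    else buildT S0 P c e m

section Directions
variable {V : Type*} [Fintype V] (G : SimpleGraph V)

lemma dirB {p : ℕ} {c : V} (h : HasPathSpiderCoverC G p c) :
    ∃ T : SimpleGraph (V ⊕ Fin (p - 1)),
      IsSpanningTree (addUniversal G (p - 1)) T ∧ branchSet T ⊆ {Sum.inl c} := by
  classical
  obtain ⟨hp, F, hspider, hpaths, hpart⟩ := h
  set k := p - 1 with hk
  have hpk : p = k + 1 := by omega
  set i0 : Fin p := ⟨0, hp⟩ with hi0
  have hi0v : i0.val = 0 := rfl
  have huniq : ∀ {u : V} {i i' : Fin p}, u ∈ (F i).verts → u ∈ (F i').verts → i = i' := by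
    intro u i i' hi hi'
    obtain ⟨w, hw, hw'⟩ := hpart u
    exact (hw' i hi).trans (hw' i' hi').symm
  have hcv : c ∈ (F i0).verts := hspider.2.2.1
  have hjlt : ∀ j : Fin k, j.val + 1 < p := fun j => by omega
  set js : Fin k → Fin p := fun j => ⟨j.val + 1, hjlt j⟩ with hjs
  have hjsv : ∀ j : Fin k, (js j).val = j.val + 1 := fun j => rfl
  have hjs0 : ∀ j : Fin k, js j ≠ i0 := by
    intro j hje
    have := congr_arg Fin.val hje
    simp [hjs, hi0] at this
  have hleaf : ∀ j : Fin k, ∃ v ∈ (F (js j)).verts, ((F (js j)).neighborSet v).ncard ≤ 1 :=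
    fun j => subgraph_exists_leaf (hpaths _ (hjs0 j)).1 (hpaths _ (hjs0 j)).2.1
  set ep : Fin k → V := fun j => (hleaf j).choose with hepd
  have hepv : ∀ j, ep j ∈ (F (js j)).verts := fun j => (hleaf j).choose_spec.1
  have hepl : ∀ j, ((F (js j)).neighborSet (ep j)).ncard ≤ 1 := fun j => (hleaf j).choose_spec.2
  set T : ℕ → SimpleGraph (V ⊕ Fin k) := buildT (F i0) (fun j => F (js j)) c ep with hTd
  set SS : ℕ → Set (V ⊕ Fin k) := fun m =>
    {x | (∃ (u : V) (i : Fin p), i.val ≤ m ∧ u ∈ (F i).verts ∧ x = Sum.inl u) ∨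
      ∃ j : Fin k, j.val < m ∧ x = Sum.inr j} with hSSd
  set DD : ℕ → (V ⊕ Fin k) → (V ⊕ Fin k) → Prop := fun m x y =>
    (∃ i : Fin p, i.val ≤ m ∧ ∃ u v, (F i).Adj u v ∧ x = Sum.inl u ∧ y = Sum.inl v) ∨
      ∃ j : Fin k, j.val < m ∧ ((x = Sum.inr j ∧ (y = Sum.inl c ∨ y = Sum.inl (ep j))) ∨
        (y = Sum.inr j ∧ (x = Sum.inl c ∨ x = Sum.inl (ep j)))) with hDDd
  have KEY : ∀ m, m ≤ k → (T m ≤ addUniversal G k) ∧ (T m).IsAcyclic ∧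
      ((T m).support ⊆ SS m) ∧ (∀ x ∈ SS m, (T m).Reachable x (Sum.inl c)) ∧
      (∀ x y, (T m).Adj x y ↔ DD m x y) := by
    intro m
    induction m with
    | zero =>
      intro _
      have hT0 : T 0 = liftSub (F i0) := rfl
      refine ⟨hT0 ▸ liftSub_le, hT0 ▸ liftSub_acyclic hspider.2.1, ?_, ?_, ?_⟩
      · rw [hT0]
        intro x hx
        obtain ⟨u, hu, rfl⟩ := liftSub_support hx
        exact Or.inl ⟨u, i0, by rw [hi0v], hu, rfl⟩
      · rintro x (⟨u, i, hi, hu, rfl⟩ | ⟨j, hj, rfl⟩)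
        · have : i = i0 := Fin.ext (by rw [hi0v]; omega)
          subst this
          exact hT0 ▸ liftSub_reachable hspider.1 hu hcv
        · omega
      · intro x y
        rw [hT0, liftSub_adj]
        constructor
        · rintro ⟨u, v, huv, rfl, rfl⟩
          exact Or.inl ⟨i0, by rw [hi0v], u, v, huv, rfl, rfl⟩
        · rintro (⟨i, hi, u, v, huv, rfl, rfl⟩ | ⟨j, hj, -⟩)
          · have : i = i0 := Fin.ext (by rw [hi0v]; omega)
            subst this
            exact ⟨u, v, huv, rfl, rfl⟩
          · omega
    | succ m ih =>
      intro hm1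
      have hm : m < k := by omega
      obtain ⟨ihA, ihB, ihC, ihD, ihE⟩ := ih (by omega)
      set j : Fin k := ⟨m, hm⟩ with hjd
      have hjv : j.val = m := rfl
      set A := T m with hAd
      set E1 := eg (Sum.inr j : V ⊕ Fin k) (Sum.inl c) with hE1d
      set L := liftSub (k := k) (F (js j)) with hLd
      set E2 := eg (Sum.inr j : V ⊕ Fin k) (Sum.inl (ep j)) with hE2d
      have hTm1 : T (m + 1) = ((A ⊔ E1) ⊔ L) ⊔ E2 := by
        rw [hTd]
        show buildT (F i0) (fun j => F (js j)) c ep (m + 1) = _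
        rw [buildT, dif_pos hm]
      have hne1 : (Sum.inr j : V ⊕ Fin k) ≠ Sum.inl c := by simp
      have hne2 : (Sum.inr j : V ⊕ Fin k) ≠ Sum.inl (ep j) := by simp
      -- j is not in the support of A
      have hjA : (Sum.inr j : V ⊕ Fin k) ∉ A.support := by
        intro hx
        rcases ihC hx with ⟨u, i, hi, hu, heq⟩ | ⟨j', hj', heq⟩
        · exact absurd heq (by simp)
        · rw [Sum.inr.injEq] at heq
          subst heq
          omega
      -- supports of (A ⊔ E1) vs L are disjoint
      have hsupL : ∀ x ∈ (A ⊔ E1).support,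
          x ∈ SS m ∨ x = Sum.inr j ∨ x = Sum.inl c := by
        intro x hx
        rcases support_sup _ _ hx with hx | hx
        · exact Or.inl (ihC hx)
        · exact Or.inr (support_fromEdgeSet_pair hx)
      have hLsup : L.support ⊆ Sum.inl '' (F (js j)).verts := liftSub_support
      have hnotinLverts : ∀ x, (x ∈ SS m ∨ x = Sum.inr j ∨ x = Sum.inl c) →
          x ∈ Sum.inl '' (F (js j)).verts → False := by
        rintro x hx ⟨w, hw, rfl⟩
        rcases hx with (⟨u, i, hi, hu, heq⟩ | ⟨j', hj', heq⟩) | heq | heq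
        · rw [Sum.inl.injEq] at heq
          subst heq
          have h5 := huniq hu hw
          rw [h5, hjsv] at hi
          omega
        · exact absurd heq (by simp)
        · exact absurd heq (by simp)
        · rw [Sum.inl.injEq] at heq
          subst heq
          have := huniq hcv hw
          exact hjs0 j this.symm
      have hdisj : Disjoint (A ⊔ E1).support L.support := by
        rw [Set.disjoint_left]
        intro x hx hx'
        exact hnotinLverts x (hsupL x hx) (hLsup hx')
      have st1 : (A ⊔ E1).IsAcyclic :=
        acyclic_sup_edge ihB hne1 (not_reachable_of_not_mem_support hjA hne1)
      have st2 : ((A ⊔ E1) ⊔ L).IsAcyclic :=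
        acyclic_sup_of_disjoint_support hdisj st1
          (liftSub_acyclic (hpaths _ (hjs0 j)).2.1)
      have hnr2 : ¬ ((A ⊔ E1) ⊔ L).Reachable (Sum.inr j) (Sum.inl (ep j)) := by
        intro hre
        rcases reachable_sup_of_disjoint_support hdisj hre hne2 with hre' | hre'
        · have := hsupL _ (mem_support_of_reachable_ne hre'.symm (Ne.symm hne2))
          exact hnotinLverts _ this ⟨ep j, hepv j, rfl⟩
        · have := hLsup (mem_support_of_reachable_ne hre' hne2)
          obtain ⟨w, -, hw⟩ := this
          exact absurd hw (by simp)
      have st3 : (T (m + 1)).IsAcyclic := by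
        rw [hTm1]
        exact acyclic_sup_edge st2 hne2 hnr2
      -- the ≤ direction
      have hEle : ∀ x : V, eg (Sum.inr j : V ⊕ Fin k) (Sum.inl x) ≤ addUniversal G k := by
        intro x a b hab
        rw [eg_adj (by simp)] at hab
        rcases hab with ⟨rfl, rfl⟩ | ⟨rfl, rfl⟩
        · exact (addUniversal_adj_inr (u := x) (j := j)).symm
        · exact addUniversal_adj_inr
      have hA1 : T (m + 1) ≤ addUniversal G k := by
        rw [hTm1]
        exact sup_le (sup_le (sup_le ihA (hEle c)) liftSub_le) (hEle (ep j))
      -- support bound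
      have hC1 : (T (m + 1)).support ⊆ SS (m + 1) := by
        rw [hTm1]
        intro x hx
        have hSSmono : SS m ⊆ SS (m + 1) := by
          rintro y (⟨u, i, hi, hu, rfl⟩ | ⟨j', hj', rfl⟩)
          · exact Or.inl ⟨u, i, by omega, hu, rfl⟩
          · exact Or.inr ⟨j', by omega, rfl⟩
        have hjin : (Sum.inr j : V ⊕ Fin k) ∈ SS (m + 1) := Or.inr ⟨j, by omega, rfl⟩
        have hcin : (Sum.inl c : V ⊕ Fin k) ∈ SS (m + 1) := Or.inl ⟨c, i0, by rw [hi0v]; omega, hcv, rfl⟩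
        rcases support_sup _ _ hx with hx | hx
        · rcases support_sup _ _ hx with hx | hx
          · rcases support_sup _ _ hx with hx | hx
            · exact hSSmono (ihC hx)
            · rcases support_fromEdgeSet_pair hx with rfl | rfl
              · exact hjin
              · exact hcin
          · obtain ⟨w, hw, rfl⟩ := hLsup hx
            exact Or.inl ⟨w, js j, by rw [hjsv], hw, rfl⟩
        · rcases support_fromEdgeSet_pair hx with rfl | rfl
          · exact hjin
          · exact Or.inl ⟨ep j, js j, by rw [hjsv], hepv j, rfl⟩
      -- reachability
      have hle1 : A ≤ T (m + 1) := by
        rw [hTm1]; exact le_trans le_sup_left (le_trans le_sup_left le_sup_left)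
      have hle2 : E1 ≤ T (m + 1) := by
        rw [hTm1]; exact le_trans le_sup_right (le_trans le_sup_left le_sup_left)
      have hle3 : L ≤ T (m + 1) := by
        rw [hTm1]; exact le_trans le_sup_right le_sup_left
      have hle4 : E2 ≤ T (m + 1) := by
        rw [hTm1]; exact le_sup_right
      have hadjE1 : (T (m + 1)).Adj (Sum.inr j) (Sum.inl c) :=
        hle2 ((eg_adj hne1).mpr (Or.inl ⟨rfl, rfl⟩))
      have hadjE2 : (T (m + 1)).Adj (Sum.inr j) (Sum.inl (ep j)) :=
        hle4 ((eg_adj hne2).mpr (Or.inl ⟨rfl, rfl⟩))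
      have hD1 : ∀ x ∈ SS (m + 1), (T (m + 1)).Reachable x (Sum.inl c) := by
        rintro x (⟨u, i, hi, hu, rfl⟩ | ⟨j', hj', rfl⟩)
        · rcases Nat.lt_or_ge i.val (m + 1) with hi' | hi'
          · exact (ihD _ (Or.inl ⟨u, i, by omega, hu, rfl⟩)).mono hle1
          · have : i = js j := Fin.ext (by rw [hjsv]; omega)
            subst this
            have h1 : (T (m + 1)).Reachable (Sum.inl u) (Sum.inl (ep j)) :=
              (liftSub_reachable (hpaths _ (hjs0 j)).1 hu (hepv j)).mono hle3
            exact h1.trans (hadjE2.symm.reachable.trans hadjE1.reachable)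
        · rcases Nat.lt_or_ge j'.val m with hj'' | hj''
          · exact (ihD _ (Or.inr ⟨j', hj'', rfl⟩)).mono hle1
          · have : j' = j := Fin.ext (by omega)
            subst this
            exact hadjE1.reachable
      -- adjacency characterization
      have hE1 : ∀ x y, (T (m + 1)).Adj x y ↔ DD (m + 1) x y := by
        intro x y
        rw [hTm1]
        simp only [sup_adj]
        constructor
        · rintro (((hxy | hxy) | hxy) | hxy)
          · rcases (ihE x y).mp hxy with ⟨i, hi, u, v, huv, rfl, rfl⟩ | ⟨j', hj', hj2⟩
            · exact Or.inl ⟨i, by omega, u, v, huv, rfl, rfl⟩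
            · exact Or.inr ⟨j', by omega, hj2⟩
          · rw [hE1d, eg_adj hne1] at hxy
            rcases hxy with ⟨rfl, rfl⟩ | ⟨rfl, rfl⟩
            · exact Or.inr ⟨j, by omega, Or.inl ⟨rfl, Or.inl rfl⟩⟩
            · exact Or.inr ⟨j, by omega, Or.inr ⟨rfl, Or.inl rfl⟩⟩
          · rw [hLd, liftSub_adj] at hxy
            obtain ⟨u, v, huv, rfl, rfl⟩ := hxy
            exact Or.inl ⟨js j, by rw [hjsv], u, v, huv, rfl, rfl⟩
          · rw [hE2d, eg_adj hne2] at hxy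
            rcases hxy with ⟨rfl, rfl⟩ | ⟨rfl, rfl⟩
            · exact Or.inr ⟨j, by omega, Or.inl ⟨rfl, Or.inr rfl⟩⟩
            · exact Or.inr ⟨j, by omega, Or.inr ⟨rfl, Or.inr rfl⟩⟩
        · rintro (⟨i, hi, u, v, huv, rfl, rfl⟩ | ⟨j', hj', hj2⟩)
          · rcases Nat.lt_or_ge i.val (m + 1) with hi' | hi'
            · exact Or.inl (Or.inl (Or.inl ((ihE _ _).mpr
                (Or.inl ⟨i, by omega, u, v, huv, rfl, rfl⟩))))
            · have : i = js j := Fin.ext (by rw [hjsv]; omega)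
              subst this
              exact Or.inl (Or.inr ⟨u, v, huv, rfl, rfl⟩)
          · rcases Nat.lt_or_ge j'.val m with hj'' | hj''
            · exact Or.inl (Or.inl (Or.inl ((ihE _ _).mpr (Or.inr ⟨j', hj'', hj2⟩))))
            · have : j' = j := Fin.ext (by omega)
              subst this
              rcases hj2 with ⟨rfl, (rfl | rfl)⟩ | ⟨rfl, (rfl | rfl)⟩
              · exact Or.inl (Or.inl (Or.inr ((eg_adj hne1).mpr (Or.inl ⟨rfl, rfl⟩))))
              · exact Or.inr ((eg_adj hne2).mpr (Or.inl ⟨rfl, rfl⟩))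
              · exact Or.inl (Or.inl (Or.inr ((eg_adj hne1).mpr (Or.inr ⟨rfl, rfl⟩))))
              · exact Or.inr ((eg_adj hne2).mpr (Or.inr ⟨rfl, rfl⟩))
      exact ⟨hA1, st3, hC1, hD1, hE1⟩
  obtain ⟨ka, kb, kc, kd, ke⟩ := KEY k le_rfl
  have hSSall : ∀ x : V ⊕ Fin k, x ∈ SS k := by
    intro x
    cases x with
    | inl u =>
      obtain ⟨i, hi, -⟩ := hpart u
      exact Or.inl ⟨u, i, by omega, hi, rfl⟩
    | inr j => exact Or.inr ⟨j, j.isLt, rfl⟩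
  have hconn : (T k).Connected := by
    rw [connected_iff_exists_forall_reachable]
    exact ⟨Sum.inl c, fun x => (kd x (hSSall x)).symm⟩
  refine ⟨T k, ⟨ka, hconn, kb⟩, ?_⟩
  -- branch set analysis
  intro x hx
  rw [branchSet, Set.mem_setOf_eq] at hx
  rw [Set.mem_singleton_iff]
  cases x with
  | inr j =>
    exfalso
    have hsub : (T k).neighborSet (Sum.inr j) ⊆ {Sum.inl c, Sum.inl (ep j)} := by
      intro y hy
      rcases (ke _ _).mp hy with ⟨i, hi, u, v, huv, heq, -⟩ | ⟨j', hj', hj2⟩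
      · exact absurd heq (by simp)
      · rcases hj2 with ⟨heq, hy'⟩ | ⟨-, (heq | heq)⟩
        · rw [Sum.inr.injEq] at heq
          subst heq
          rcases hy' with rfl | rfl
          · exact Or.inl rfl
          · exact Or.inr rfl
        · exact absurd heq (by simp)
        · exact absurd heq (by simp)
    have h2 : ((T k).neighborSet (Sum.inr j)).ncard ≤ 2 := by
      refine le_trans (Set.ncard_le_ncard hsub (Set.toFinite _)) ?_
      refine le_trans (Set.ncard_insert_le _ _) ?_
      simp [Set.ncard_singleton]
    omega
  | inl u =>
    obtain ⟨iu, hu, -⟩ := hpart u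
    by_cases huc : u = c
    · rw [huc]
    exfalso
    -- inr neighbors force u = ep j' with js j' = iu
    have hsub : (T k).neighborSet (Sum.inl u) ⊆
        (Sum.inl '' (F iu).neighborSet u) ∪ {y | ∃ j' : Fin k, y = Sum.inr j' ∧ u = ep j'} := by
      intro y hy
      rcases (ke _ _).mp hy with ⟨i, hi, a, b, hab, heq, rfl⟩ | ⟨j', hj', hj2⟩
      · rw [Sum.inl.injEq] at heq
        subst heq
        have : i = iu := huniq hab.fst_mem hu
        subst this
        exact Or.inl ⟨b, hab, rfl⟩
      · rcases hj2 with ⟨heq, -⟩ | ⟨rfl, (heq | heq)⟩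
        · exact absurd heq (by simp)
        · rw [Sum.inl.injEq] at heq
          exact absurd heq huc
        · rw [Sum.inl.injEq] at heq
          exact Or.inr ⟨j', rfl, heq⟩
    have hJ : ({y : V ⊕ Fin k | ∃ j' : Fin k, y = Sum.inr j' ∧ u = ep j'}).ncard ≤ 1 := by
      rw [Set.ncard_le_one_iff (Set.toFinite _)]
      rintro a b ⟨ja, rfl, hja⟩ ⟨jb, rfl, hjb⟩
      have h1 : js ja = iu := huniq (hja ▸ hepv ja) hu
      have h2 : js jb = iu := huniq (hjb ▸ hepv jb) hu
      have : ja = jb := by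
        have h3 := congr_arg Fin.val (h1.trans h2.symm)
        rw [hjsv, hjsv] at h3
        exact Fin.ext (by omega)
      rw [this]
    have hcard : 3 ≤ ((F iu).neighborSet u).ncard + 1 := by
      calc 3 ≤ ((T k).neighborSet (Sum.inl u)).ncard := hx
        _ ≤ ((Sum.inl '' (F iu).neighborSet u) ∪
            {y | ∃ j' : Fin k, y = Sum.inr j' ∧ u = ep j'}).ncard :=
          Set.ncard_le_ncard hsub (Set.toFinite _)
        _ ≤ (Sum.inl '' (F iu).neighborSet u).ncard +
            ({y : V ⊕ Fin k | ∃ j' : Fin k, y = Sum.inr j' ∧ u = ep j'}).ncard :=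
          Set.ncard_union_le _ _
        _ ≤ ((F iu).neighborSet u).ncard + 1 := by
          rw [Set.ncard_image_of_injective _ Sum.inl_injective]
          omega
    by_cases hiu : iu = i0
    · -- spider part: no inr neighbors, so 3 ≤ ncard, hence u = c
      have hJ0 : {y : V ⊕ Fin k | ∃ j' : Fin k, y = Sum.inr j' ∧ u = ep j'} = ∅ := by
        rw [Set.eq_empty_iff_forall_notMem]
        rintro y ⟨j', rfl, hj'⟩
        have : js j' = iu := huniq (hj' ▸ hepv j') hu
        exact hjs0 j' (this.trans hiu)
      have hcard3 : 3 ≤ ((F iu).neighborSet u).ncard := by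
        calc 3 ≤ ((T k).neighborSet (Sum.inl u)).ncard := hx
          _ ≤ (Sum.inl '' (F iu).neighborSet u).ncard := by
            refine Set.ncard_le_ncard ?_ (Set.toFinite _)
            intro y hy
            rcases hsub hy with hy' | hy'
            · exact hy'
            · exact absurd hy' (hJ0 ▸ Set.notMem_empty y)
          _ = ((F iu).neighborSet u).ncard :=
            Set.ncard_image_of_injective _ Sum.inl_injective
      exact huc (hspider.2.2.2 u (hiu ▸ hcard3))
    · -- path part
      have hple : ((F iu).neighborSet u).ncard ≤ 2 := (hpaths iu hiu).2.2 u
      by_cases hex : ∃ j' : Fin k, u = ep j'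
      · obtain ⟨j', hj'⟩ := hex
        have hjsu : js j' = iu := huniq (hj' ▸ hepv j') hu
        have := hepl j'
        rw [hjsu, ← hj'] at this
        omega
      · have hJ0 : {y : V ⊕ Fin k | ∃ j' : Fin k, y = Sum.inr j' ∧ u = ep j'} = ∅ := by
          rw [Set.eq_empty_iff_forall_notMem]
          rintro y ⟨j', rfl, hj'⟩
          exact hex ⟨j', hj'⟩
        have hcard3 : 3 ≤ ((F iu).neighborSet u).ncard := by
          calc 3 ≤ ((T k).neighborSet (Sum.inl u)).ncard := hx
            _ ≤ (Sum.inl '' (F iu).neighborSet u).ncard := by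
              refine Set.ncard_le_ncard ?_ (Set.toFinite _)
              intro y hy
              rcases hsub hy with hy' | hy'
              · exact hy'
              · exact absurd hy' (hJ0 ▸ Set.notMem_empty y)
            _ = ((F iu).neighborSet u).ncard :=
              Set.ncard_image_of_injective _ Sum.inl_injective
        omega

lemma dirA {ℓ : ℕ} (hℓ : 1 ≤ ℓ) (c : V) (T : SimpleGraph (V ⊕ Fin (ℓ - 1)))
    (hT : IsSpanningTree (addUniversal G (ℓ - 1)) T) (hb : branchSet T ⊆ {Sum.inl c}) :
    ∃ p ≤ ℓ, HasPathSpiderCoverC G p c := by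
  classical
  obtain ⟨hle, htree⟩ := hT
  have hconn : T.Connected := htree.isConnected
  have hac : T.IsAcyclic := htree.IsAcyclic
  set T' : SimpleGraph V := T.comap Sum.inl with hT'd
  have hT'adj : ∀ u v : V, T'.Adj u v ↔ T.Adj (Sum.inl u) (Sum.inl v) := fun u v => Iff.rfl
  have hT'ac : T'.IsAcyclic := by
    intro a p hp
    exact hac (p.map ⟨Sum.inl, fun {x y} h => h⟩) (hp.map Sum.inl_injective)
  have hfin : Finite T'.ConnectedComponent := Quot.finite _
  have hfty : Fintype T'.ConnectedComponent := Fintype.ofFinite _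
  set cc : V → T'.ConnectedComponent := T'.connectedComponentMk with hccd
  set D0 := cc c with hD0d
  -- branch bound: non-center vertices have degree at most 2
  have hdeg : ∀ x : V ⊕ Fin (ℓ - 1), x ≠ Sum.inl c → (T.neighborSet x).ncard ≤ 2 := by
    intro x hx
    by_contra hcon
    exact hx (hb (by rw [branchSet, Set.mem_setOf_eq]; omega))
  -- for each non-center component, find the attaching inr vertex
  have hstep : ∀ x : V ⊕ Fin (ℓ - 1), x ≠ Sum.inl c →
      ∃ z, T.Adj x z ∧ T.dist z (Sum.inl c) + 1 = T.dist x (Sum.inl c) :=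
    fun x hx => dist_step hconn hx
  have hattach : ∀ D : T'.ConnectedComponent, D ≠ D0 → ∃ j : Fin (ℓ - 1),
      ∃ v0 ∈ D.supp, T.Adj (Sum.inl v0) (Sum.inr j) ∧
        (T.dist (Sum.inr j) (Sum.inl c) + 1 = T.dist (Sum.inl v0) (Sum.inl c)) ∧
        (∀ a ∈ D.supp, T.dist (Sum.inl v0) (Sum.inl c) ≤ T.dist (Sum.inl a) (Sum.inl c)) := by
    intro D hD
    obtain ⟨v, hv⟩ := D.exists_rep
    have hsne : D.supp.Nonempty := ⟨v, by rw [SimpleGraph.ConnectedComponent.mem_supp_iff]; exact hv⟩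
    obtain ⟨v0, hv0, hmin⟩ := Set.exists_min_image D.supp
      (fun a => T.dist (Sum.inl a) (Sum.inl c)) (Set.toFinite _) hsne
    have hv0c : (Sum.inl v0 : V ⊕ Fin (ℓ - 1)) ≠ Sum.inl c := by
      intro he
      rw [Sum.inl.injEq] at he
      subst he
      rw [SimpleGraph.ConnectedComponent.mem_supp_iff] at hv0
      exact hD hv0.symm
    obtain ⟨z, hz, hzd⟩ := hstep _ hv0c
    cases z with
    | inl u =>
      exfalso
      have hu : u ∈ D.supp := by
        rw [SimpleGraph.ConnectedComponent.mem_supp_iff]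
        rw [SimpleGraph.ConnectedComponent.mem_supp_iff] at hv0
        rw [← hv0]
        exact (SimpleGraph.ConnectedComponent.connectedComponentMk_eq_of_adj
          ((hT'adj v0 u).mpr hz)).symm
      have := hmin u hu
      omega
    | inr j => exact ⟨j, v0, hv0, hz, hzd, hmin⟩
  set jf : ∀ D : T'.ConnectedComponent, D ≠ D0 → Fin (ℓ - 1) := fun D hD => (hattach D hD).choose
    with hjfd
  have hjf : ∀ (D : T'.ConnectedComponent) (hD : D ≠ D0),
      ∃ v0 ∈ D.supp, T.Adj (Sum.inl v0) (Sum.inr (jf D hD)) ∧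
        (T.dist (Sum.inr (jf D hD)) (Sum.inl c) + 1 = T.dist (Sum.inl v0) (Sum.inl c)) ∧
        (∀ a ∈ D.supp, T.dist (Sum.inl v0) (Sum.inl c) ≤ T.dist (Sum.inl a) (Sum.inl c)) :=
    fun D hD => (hattach D hD).choose_spec
  -- injectivity of the attachment
  have hinj : ∀ (D1 D2 : T'.ConnectedComponent) (h1 : D1 ≠ D0) (h2 : D2 ≠ D0),
      jf D1 h1 = jf D2 h2 → D1 = D2 := by
    intro D1 D2 h1 h2 hj
    by_contra hne
    obtain ⟨v1, hv1, ha1, hd1, -⟩ := hjf D1 h1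
    obtain ⟨v2, hv2, ha2, hd2, -⟩ := hjf D2 h2
    set j := jf D1 h1 with hjd
    rw [← hj] at ha2 hd2
    have hv12 : v1 ≠ v2 := by
      intro he
      subst he
      rw [SimpleGraph.ConnectedComponent.mem_supp_iff] at hv1 hv2
      exact hne (hv1.symm.trans hv2)
    have hjc : (Sum.inr j : V ⊕ Fin (ℓ - 1)) ≠ Sum.inl c := by simp
    obtain ⟨z, hz, hzd⟩ := hstep _ hjc
    have hzv1 : z ≠ Sum.inl v1 := by
      intro he; subst he; omega
    have hzv2 : z ≠ Sum.inl v2 := by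
      intro he; subst he; omega
    have h3 : 2 < (T.neighborSet (Sum.inr j)).ncard := by
      rw [Set.two_lt_ncard (Set.toFinite _)]
      exact ⟨Sum.inl v1, ha1.symm, Sum.inl v2, ha2.symm, z, hz,
        by simp [hv12], hzv1.symm, hzv2.symm⟩
    have := hdeg (Sum.inr j) (by simp)
    omega
  -- cardinality bound
  set p := Fintype.card T'.ConnectedComponent with hpd
  have hp : 0 < p := Fintype.card_pos_iff.mpr ⟨D0⟩
  have hple : p ≤ ℓ := by
    have : Function.Injective (fun D : T'.ConnectedComponent =>
        if h : D = D0 then (none : Option (Fin (ℓ - 1))) else some (jf D h)) := by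
      intro D1 D2 he
      by_cases h1 : D1 = D0 <;> by_cases h2 : D2 = D0 <;>
        simp [h1, h2] at he
      · rw [h1, h2]
      · exact hinj D1 D2 h1 h2 he
    have hcard := Fintype.card_le_of_injective _ this
    rw [Fintype.card_option, Fintype.card_fin] at hcard
    omega
  -- enumeration with the center component first
  set e0 := Fintype.equivFin T'.ConnectedComponent with he0d
  set e : Fin p ≃ T'.ConnectedComponent :=
    (Equiv.swap (⟨0, hp⟩ : Fin p) (e0 D0)).trans e0.symm with hed
  have he0 : e ⟨0, hp⟩ = D0 := by
    rw [hed]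
    simp [Equiv.swap_apply_left]
  -- component subgraphs
  set compSub : T'.ConnectedComponent → G.Subgraph := fun D =>
    { verts := D.supp
      Adj := fun u v => T'.Adj u v ∧ u ∈ D.supp ∧ v ∈ D.supp
      adj_sub := fun h => by
        have := hle ((hT'adj _ _).mp h.1)
        rwa [addUniversal_adj_inl] at this
      edge_vert := fun h => h.2.1
      symm := ⟨fun u v h => ⟨h.1.symm, h.2.2, h.2.1⟩⟩ } with hcompd
  have hcverts : ∀ D, (compSub D).verts = D.supp := fun D => rfl
  have hcadj : ∀ D u v, (compSub D).Adj u v ↔ T'.Adj u v ∧ u ∈ D.supp ∧ v ∈ D.supp :=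
    fun D u v => Iff.rfl
  -- connectivity of components
  have hreach : ∀ (D : T'.ConnectedComponent) (u v : V) (hu : u ∈ D.supp) (hv : v ∈ D.supp),
      (compSub D).coe.Reachable ⟨u, hu⟩ ⟨v, hv⟩ := by
    intro D
    have claim : ∀ (a b : V) (q : T'.Walk a b) (ha : a ∈ D.supp) (hbm : b ∈ D.supp),
        (compSub D).coe.Reachable ⟨a, ha⟩ ⟨b, hbm⟩ := by
      intro a b q
      induction q with
      | nil =>
        intro ha hbm
        exact SimpleGraph.Reachable.refl _
      | @cons x y z hadj q ih =>
        intro ha hbm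
        have hbD : y ∈ D.supp := by
          rw [SimpleGraph.ConnectedComponent.mem_supp_iff] at ha ⊢
          rw [← ha]
          exact (SimpleGraph.ConnectedComponent.connectedComponentMk_eq_of_adj hadj).symm
        have hstep2 : (compSub D).coe.Adj ⟨x, ha⟩ ⟨y, hbD⟩ := ⟨hadj, ha, hbD⟩
        exact hstep2.reachable.trans (ih hbD hbm)
    intro u v hu hv
    have hr : T'.Reachable u v := by
      rw [SimpleGraph.ConnectedComponent.mem_supp_iff] at hu hv
      exact SimpleGraph.ConnectedComponent.exact (hu.trans hv.symm)
    obtain ⟨q⟩ := hr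
    exact claim u v q hu hv
  have hcompconn : ∀ D, (compSub D).Connected := by
    intro D
    rw [SimpleGraph.Subgraph.connected_iff']
    obtain ⟨v, hv⟩ := D.exists_rep
    have hvs : v ∈ D.supp := by rw [SimpleGraph.ConnectedComponent.mem_supp_iff]; exact hv
    rw [connected_iff_exists_forall_reachable]
    refine ⟨⟨v, hvs⟩, ?_⟩
    rintro ⟨w, hw⟩
    exact (hreach D v w hvs hw)
  -- acyclicity of components
  have hcompac : ∀ D, (compSub D).coe.IsAcyclic := by
    intro D a q hq
    refine hT'ac (q.map ⟨Subtype.val, fun {x y} h => ?_⟩) (hq.map Subtype.val_injective)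
    have h' : (compSub D).Adj x.val y.val := h
    exact h'.1
  -- degree bound transfer
  have hcompdeg : ∀ D v, ((compSub D).neighborSet v).ncard ≤
      (T.neighborSet (Sum.inl v)).ncard := by
    intro D v
    have hsub : Sum.inl '' (compSub D).neighborSet v ⊆ T.neighborSet (Sum.inl v) := by
      rintro x ⟨w, hw, rfl⟩
      exact (hT'adj _ _).mp hw.1
    calc ((compSub D).neighborSet v).ncard
        = (Sum.inl '' (compSub D).neighborSet v).ncard :=
          (Set.ncard_image_of_injective _ Sum.inl_injective).symm
      _ ≤ (T.neighborSet (Sum.inl v)).ncard := Set.ncard_le_ncard hsub (Set.toFinite _)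
  have hbranch : ∀ D v, 3 ≤ ((compSub D).neighborSet v).ncard → v = c := by
    intro D v h3
    have h4 : Sum.inl v ∈ branchSet T := by
      rw [branchSet, Set.mem_setOf_eq]
      exact le_trans h3 (hcompdeg D v)
    have := hb h4
    rw [Set.mem_singleton_iff, Sum.inl.injEq] at this
    exact this
  -- assemble the cover
  refine ⟨p, hple, hp, fun i => compSub (e i), ?_, ?_, ?_⟩
  · -- spider
    refine ⟨hcompconn _, hcompac _, ?_, ?_⟩
    · show c ∈ (compSub (e ⟨0, hp⟩)).verts
      rw [he0, hcverts, SimpleGraph.ConnectedComponent.mem_supp_iff]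
    · intro v hv
      exact hbranch _ v hv
  · -- paths
    intro i hi
    refine ⟨hcompconn _, hcompac _, ?_⟩
    intro v
    by_contra hcon
    push_neg at hcon
    have h3 : 3 ≤ ((compSub (e i)).neighborSet v).ncard := hcon
    have hvc : v = c := hbranch _ v h3
    subst hvc
    -- v = c has a neighbor, so c ∈ supp (e i), so e i = D0, contradiction
    have hne0 : ((compSub (e i)).neighborSet v).ncard ≠ 0 := by omega
    obtain ⟨w, hw⟩ := Set.nonempty_of_ncard_ne_zero hne0
    have hcs : v ∈ (e i).supp := hw.2.1
    rw [SimpleGraph.ConnectedComponent.mem_supp_iff] at hcs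
    have : e i = e ⟨0, hp⟩ := by rw [he0, ← hcs]
    exact hi (e.injective this)
  · -- partition
    intro v
    refine ⟨e.symm (cc v), ?_, ?_⟩
    · show v ∈ (compSub (e (e.symm (cc v)))).verts
      rw [hcverts, Equiv.apply_symm_apply, SimpleGraph.ConnectedComponent.mem_supp_iff]
    · intro i hi
      have : cc v = e i := by
        have := hi
        rw [hcverts] at this
        rw [SimpleGraph.ConnectedComponent.mem_supp_iff] at this
        exact this
      rw [this, Equiv.symm_apply_apply]

end Directions

theorem stmt4 {V : Type*} [Fintype V] (G : SimpleGraph V) :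
    spiNum G = sInf {ℓ | 1 ≤ ℓ ∧ ∃ (c : V) (T : SimpleGraph (V ⊕ Fin (ℓ - 1))),
      IsSpanningTree (addUniversal G (ℓ - 1)) T ∧ branchSet T ⊆ {Sum.inl c}} := by
  set A := {p | ∃ c, HasPathSpiderCoverC G p c} with hA
  set B := {ℓ | 1 ≤ ℓ ∧ ∃ (c : V) (T : SimpleGraph (V ⊕ Fin (ℓ - 1))),
      IsSpanningTree (addUniversal G (ℓ - 1)) T ∧ branchSet T ⊆ {Sum.inl c}} with hB
  have hAB : ∀ p ∈ A, p ∈ B := by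
    rintro p ⟨c, hc⟩
    obtain ⟨hp, rest⟩ := hc
    obtain ⟨T, hT, hbr⟩ := dirB G ⟨hp, rest⟩
    exact ⟨hp, c, T, hT, hbr⟩
  rcases Set.eq_empty_or_nonempty B with hBe | hBn
  · have hAe : A = ∅ := by
      rw [Set.eq_empty_iff_forall_notMem]
      intro p hp
      exact (Set.eq_empty_iff_forall_notMem.mp hBe) p (hAB p hp)
    have : spiNum G = sInf A := rfl
    rw [this, hAe, hBe]
  · have hℓ := Nat.sInf_mem hBn
    obtain ⟨h1, c, T, hT, hbr⟩ := hℓ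
    obtain ⟨p, hpl, hpc⟩ := dirA G h1 c T hT hbr
    have hpA : p ∈ A := ⟨c, hpc⟩
    have hAn : A.Nonempty := ⟨p, hpA⟩
    have h2 : sInf A ≤ sInf B := le_trans (Nat.sInf_le hpA) hpl
    have h3 : sInf B ≤ sInf A := Nat.sInf_le (hAB _ (Nat.sInf_mem hAn))
    have : spiNum G = sInf A := rfl
    rw [this]
    omega
end

section
/- If V_i is a set of vertices inducing an independent set in a graph G, such that all vertices of V_i have the same neighborhood outside V_i, and T is a spanning tree of G in which some vertex v ∈ V_i is a branch vertex while u ∈ V_i is not, then there exists a spanning tree T' of G whose set of branch vertices is (B(T) \ {v}) ∪ {u}. -/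
open SimpleGraph

variable {V : Type*}

theorem stmt8 {V : Type*} [Fintype V] (G : SimpleGraph V) (Vi : Set V)
    (hind : ∀ u ∈ Vi, ∀ v ∈ Vi, ¬G.Adj u v)
    (hnbr : ∀ u ∈ Vi, ∀ v ∈ Vi, ∀ x ∉ Vi, (G.Adj u x ↔ G.Adj v x))
    (T : SimpleGraph V) (hT : IsSpanningTree G T)
    (u v : V) (hu : u ∈ Vi) (hv : v ∈ Vi)
    (hvb : v ∈ branchSet T) (hub : u ∉ branchSet T) :
    ∃ T' : SimpleGraph V, IsSpanningTree G T' ∧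
      branchSet T' = (branchSet T \ {v}) ∪ {u} := by
  classical
  set σ : Equiv.Perm V := Equiv.swap u v with hσ
  have huv : u ≠ v := by rintro rfl; exact hub hvb
  -- twins: for x outside {u,v}, adjacency to u equals adjacency to v
  have key : ∀ x, x ≠ u → x ≠ v → (G.Adj u x ↔ G.Adj v x) := by
    intro x hxu hxv
    by_cases hx : x ∈ Vi
    · constructor
      · intro h; exact absurd h (hind u hu x hx)
      · intro h; exact absurd h (hind v hv x hx)
    · exact hnbr u hu v hv x hx
  have hswap1 : ∀ x y, G.Adj x y → G.Adj (σ x) (σ y) := by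
    intro x y hxy
    have hxy' : x ≠ y := hxy.ne
    by_cases hxu : x = u
    · rw [hxu] at hxy ⊢
      by_cases hyv : y = v
      · rw [hyv] at hxy; exact absurd hxy (hind u hu v hv)
      · have hyu : y ≠ u := fun h => hxy' (hxu.trans h.symm)
        rw [hσ, Equiv.swap_apply_left, Equiv.swap_apply_of_ne_of_ne hyu hyv]
        exact (key y hyu hyv).mp hxy
    · by_cases hxv : x = v
      · rw [hxv] at hxy ⊢
        by_cases hyu : y = u
        · rw [hyu] at hxy; exact absurd hxy.symm (hind u hu v hv)
        · have hyv : y ≠ v := fun h => hxy' (hxv.trans h.symm)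
          rw [hσ, Equiv.swap_apply_right, Equiv.swap_apply_of_ne_of_ne hyu hyv]
          exact ((key y hyu hyv).mpr hxy).symm.symm
      · rw [show σ x = x from Equiv.swap_apply_of_ne_of_ne hxu hxv]
        by_cases hyu : y = u
        · rw [hyu] at hxy ⊢
          rw [hσ, Equiv.swap_apply_left]
          exact ((key x hxu hxv).mp hxy.symm).symm
        · by_cases hyv : y = v
          · rw [hyv] at hxy ⊢
            rw [hσ, Equiv.swap_apply_right]
            exact ((key x hxu hxv).mpr hxy.symm).symm
          · rw [show σ y = y from Equiv.swap_apply_of_ne_of_ne hyu hyv]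
            exact hxy
  have hσσ : ∀ x, σ (σ x) = x := fun x => Equiv.swap_apply_self u v x
  have hswap : ∀ x y, G.Adj (σ x) (σ y) ↔ G.Adj x y := by
    intro x y
    constructor
    · intro h
      have := hswap1 _ _ h
      rwa [hσσ, hσσ] at this
    · exact hswap1 x y
  -- the transported tree
  let T' : SimpleGraph V :=
    { Adj := fun x y => T.Adj (σ x) (σ y)
      symm := ⟨fun x y (h : T.Adj (σ x) (σ y)) => h.symm⟩
      loopless := ⟨fun x h => T.loopless.irrefl _ h⟩ }
  have hT'adj : ∀ x y, T'.Adj x y ↔ T.Adj (σ x) (σ y) := fun _ _ => Iff.rfl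
  have e : T' ≃g T := ⟨σ, Iff.rfl⟩
  refine ⟨T', ⟨?_, ?_, ?_⟩, ?_⟩
  · intro x y h
    exact (hswap x y).mp (hT.1 h)
  · exact (e.connected_iff).mpr hT.2.isConnected
  · intro x c hc
    exact hT.2.IsAcyclic (c.map e.toHom) (hc.map (fun a b h => σ.injective (by simpa using h)))
  · -- branch sets
    have hnb : ∀ x, T'.neighborSet x = σ ⁻¹' (T.neighborSet (σ x)) := by
      intro x; rfl
    have hpre : ∀ (S : Set V), σ ⁻¹' S = σ '' S := by
      intro S
      rw [show σ ⁻¹' S = σ.symm '' S from (σ.symm.image_eq_preimage_symm S).symm, hσ, Equiv.symm_swap]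
    have hcard : ∀ x, (T'.neighborSet x).ncard = (T.neighborSet (σ x)).ncard := by
      intro x
      rw [hnb, hpre]
      exact Set.ncard_image_of_injective _ (Equiv.injective σ)
    have hBT' : ∀ x, x ∈ branchSet T' ↔ σ x ∈ branchSet T := by
      intro x
      simp only [branchSet, Set.mem_setOf_eq, hcard]
    ext x
    rw [hBT']
    by_cases hxu : x = u
    · subst hxu
      rw [hσ, Equiv.swap_apply_left]
      simp [hvb]
    · by_cases hxv : x = v
      · subst hxv
        rw [hσ, Equiv.swap_apply_right]
        simp [hub, huv.symm, hxu]
      · rw [show σ x = x from Equiv.swap_apply_of_ne_of_ne hxu hxv]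
        simp [hxu, hxv]
end

section
/- Let V_i induce a clique in a connected graph G such that all vertices of V_i have the same neighborhood outside V_i, and let T be a spanning tree of G containing at least two branch vertices in V_i. Then there exists a spanning tree T' of G with strictly fewer branch vertices in V_i and no more branch vertices in total. -/
open SimpleGraph

variable {V : Type*}

section AuxStmt9
open Finset Set
variable {V : Type*}


private lemma reachable_of_walk_aux {A B : SimpleGraph V}
    (h : ∀ a b, A.Adj a b → B.Reachable a b) : ∀ {a b : V}, A.Walk a b → B.Reachable a b := by
  intro a b w
  induction w with
  | nil => exact Reachable.refl _
  | cons h' _ ih => exact (h _ _ h').trans ih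

private lemma connected_of_adj_reachable {A B : SimpleGraph V}
    (hA : A.Connected) (h : ∀ a b, A.Adj a b → B.Reachable a b) : B.Connected := by
  rw [connected_iff] at hA ⊢
  exact ⟨fun a b => (hA.1 a b).elim fun w => reachable_of_walk_aux h w, hA.2⟩

private lemma delete_cycle_edge {H : SimpleGraph V} (hH : H.Connected) (hac : ¬ H.IsAcyclic) :
    ∃ e ∈ H.edgeSet, (H \ fromEdgeSet {e}).Connected ∧
      (H \ fromEdgeSet {e}).edgeSet = H.edgeSet \ {e} := by
  rw [SimpleGraph.isAcyclic_iff_forall_adj_isBridge] at hac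
  push_neg at hac
  obtain ⟨a, b, hab, hnb⟩ := hac
  have hr : (H \ fromEdgeSet {s(a, b)}).Reachable a b := by
    by_contra hnr
    exact hnb (SimpleGraph.isBridge_iff.mpr hnr)
  refine ⟨s(a, b), hab, ?_, ?_⟩
  · refine connected_of_adj_reachable hH fun c d hcd => ?_
    by_cases he : s(c, d) = s(a, b)
    · rcases Sym2.eq_iff.mp he with ⟨rfl, rfl⟩ | ⟨rfl, rfl⟩
      · exact hr
      · exact hr.symm
    · exact Adj.reachable (by simp [sdiff_adj, fromEdgeSet_adj, hcd, he])
  · rw [edgeSet_sdiff, edgeSet_fromEdgeSet]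
    ext e
    simp only [Set.mem_diff, Set.mem_singleton_iff, Set.mem_setOf_eq]
    constructor
    · rintro ⟨h1, h2⟩
      exact ⟨h1, fun h3 => h2 ⟨h3, fun hd => H.not_isDiag_of_mem_edgeSet h1 hd⟩⟩
    · rintro ⟨h1, h2⟩
      exact ⟨h1, fun h3 => h2 h3.1⟩

private lemma ncard_edgeSet_eq [Fintype V] (H : SimpleGraph V) [Fintype H.edgeSet] :
    H.edgeSet.ncard = H.edgeFinset.card := by
  rw [Set.ncard_eq_toFinset_card']
  congr 1

private lemma tree_edge_ncard [Fintype V] {H : SimpleGraph V} (h : H.IsTree) :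
    H.edgeSet.ncard + 1 = Fintype.card V := by
  classical
  rw [ncard_edgeSet_eq]
  exact h.card_edgeFinset

private lemma card_le_of_connected [Fintype V] :
    ∀ (n : ℕ) (H : SimpleGraph V), H.edgeSet.ncard = n → H.Connected →
      Fintype.card V ≤ n + 1 := by
  intro n
  induction n using Nat.strong_induction_on with
  | _ n ih =>
    intro H hn hH
    by_cases hac : H.IsAcyclic
    · exact le_of_eq ((hn ▸ tree_edge_ncard ⟨hH, hac⟩).symm)
    · obtain ⟨e, he, hc, hes⟩ := delete_cycle_edge hH hac
      have hfin : H.edgeSet.Finite := by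
        classical
        exact Set.toFinite _
      have h1 : (H \ fromEdgeSet {e}).edgeSet.ncard = n - 1 := by
        rw [hes, Set.ncard_diff_singleton_of_mem he, hn]
      have h2 : 1 ≤ n := by
        rw [← hn]
        exact (Set.ncard_pos hfin).mpr ⟨e, he⟩
      have := ih (n - 1) (by omega) _ h1 hc
      omega

private lemma isTree_of_connected_of_card [Fintype V] {H : SimpleGraph V} (hH : H.Connected)
    (hcard : H.edgeSet.ncard + 1 ≤ Fintype.card V) : H.IsTree := by
  refine ⟨hH, ?_⟩
  by_contra hac
  obtain ⟨e, he, hc, hes⟩ := delete_cycle_edge hH hac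
  have hfin : H.edgeSet.Finite := Set.toFinite _
  have h1 : (H \ fromEdgeSet {e}).edgeSet.ncard = H.edgeSet.ncard - 1 := by
    rw [hes, Set.ncard_diff_singleton_of_mem he]
  have h2 : 1 ≤ H.edgeSet.ncard := (Set.ncard_pos hfin).mpr ⟨e, he⟩
  have := card_le_of_connected _ _ h1 hc
  omega

private lemma handshake_ncard [Fintype V] (H : SimpleGraph V) :
    2 * H.edgeSet.ncard = ∑ w, (H.neighborSet w).ncard := by
  classical
  rw [ncard_edgeSet_eq, ← H.sum_degrees_eq_twice_card_edges]
  refine Finset.sum_congr rfl fun w _ => ?_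
  rw [SimpleGraph.degree, neighborFinset_def, Set.ncard_eq_toFinset_card']

end AuxStmt9

theorem stmt9 {V : Type*} [Fintype V] (G : SimpleGraph V) (hG : G.Connected) (Vi : Set V)
    (hclq : ∀ u ∈ Vi, ∀ v ∈ Vi, u ≠ v → G.Adj u v)
    (hnbr : ∀ u ∈ Vi, ∀ v ∈ Vi, ∀ x ∉ Vi, (G.Adj u x ↔ G.Adj v x))
    (T : SimpleGraph V) (hT : IsSpanningTree G T)
    (h2 : 2 ≤ (branchSet T ∩ Vi).ncard) :
    ∃ T' : SimpleGraph V, IsSpanningTree G T' ∧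
      (branchSet T' ∩ Vi).ncard < (branchSet T ∩ Vi).ncard ∧
      (branchSet T').ncard ≤ (branchSet T).ncard := by
  classical
  have hfinB : (branchSet T ∩ Vi).Finite := Set.toFinite _
  obtain ⟨u, v, hu, hv, huv⟩ := (Set.one_lt_ncard_iff hfinB).mp (by omega)
  have huB : u ∈ branchSet T := hu.1
  have hvB : v ∈ branchSet T := hv.1
  have huVi : u ∈ Vi := hu.2
  have hvVi : v ∈ Vi := hv.2
  have huB3 : 3 ≤ (T.neighborSet u).ncard := huB
  have hvB3 : 3 ≤ (T.neighborSet v).ncard := hvB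
  have htree := hT.2
  have hTG := hT.1
  obtain ⟨p, hp, hup⟩ := htree.existsUnique_path u v
  cases p with
  | nil => exact absurd rfl huv
  | cons hux q =>
    rename_i x
    have hxu : x ≠ u := hux.ne'
    have hqsup : u ∉ q.support := ((SimpleGraph.Walk.cons_isPath_iff hux q).mp hp).2
    have hA : ∀ b, T.Adj u b → b ≠ x → b ≠ v := by
      intro b hub hbx heq
      subst heq
      have h1 : (SimpleGraph.Walk.cons hub SimpleGraph.Walk.nil).IsPath := by
        simp [SimpleGraph.Walk.cons_isPath_iff, huv]
      have h3 := congrArg SimpleGraph.Walk.support (hup _ h1)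
      rw [SimpleGraph.Walk.support_cons, SimpleGraph.Walk.support_cons,
        SimpleGraph.Walk.support_nil, q.support_eq_cons] at h3
      simp only [List.cons.injEq, true_and] at h3
      exact hbx h3.1
    have hB : ∀ b, T.Adj u b → b ≠ x → ¬ T.Adj v b := by
      intro b hub hbx hvb
      have hbv : b ≠ v := hA b hub hbx
      have h1 : (SimpleGraph.Walk.cons hub
          (SimpleGraph.Walk.cons hvb.symm SimpleGraph.Walk.nil)).IsPath := by
        simp [SimpleGraph.Walk.cons_isPath_iff, huv, hbv, hub.ne]
      have h3 := congrArg SimpleGraph.Walk.support (hup _ h1)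
      rw [SimpleGraph.Walk.support_cons, SimpleGraph.Walk.support_cons,
        SimpleGraph.Walk.support_cons, SimpleGraph.Walk.support_nil, q.support_eq_cons] at h3
      simp only [List.cons.injEq, true_and] at h3
      exact hbx h3.1
    obtain ⟨T', hadj⟩ : ∃ W : SimpleGraph V, ∀ a b, W.Adj a b ↔
        ((T.Adj a b ∧ a ≠ u ∧ b ≠ u) ∨ (a = u ∧ b = x) ∨ (a = x ∧ b = u) ∨
         (a = v ∧ b ≠ x ∧ b ≠ v ∧ T.Adj u b) ∨ (b = v ∧ a ≠ x ∧ a ≠ v ∧ T.Adj u a)) := by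
      refine ⟨⟨fun a b =>
        ((T.Adj a b ∧ a ≠ u ∧ b ≠ u) ∨ (a = u ∧ b = x) ∨ (a = x ∧ b = u) ∨
         (a = v ∧ b ≠ x ∧ b ≠ v ∧ T.Adj u b) ∨ (b = v ∧ a ≠ x ∧ a ≠ v ∧ T.Adj u a)),
        ?_, ?_⟩, fun a b => Iff.rfl⟩
      · refine ⟨fun a b h => ?_⟩
        rcases h with ⟨h1, h2, h3⟩ | ⟨h1, h2⟩ | ⟨h1, h2⟩ | h | h
        · exact Or.inl ⟨h1.symm, h3, h2⟩
        · exact Or.inr (Or.inr (Or.inl ⟨h2, h1⟩))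
        · exact Or.inr (Or.inl ⟨h2, h1⟩)
        · exact Or.inr (Or.inr (Or.inr (Or.inr h)))
        · exact Or.inr (Or.inr (Or.inr (Or.inl h)))
      · refine ⟨fun a h => ?_⟩
        rcases h with ⟨h1, -, -⟩ | ⟨h1, h2⟩ | ⟨h1, h2⟩ | ⟨h1, -, h3, -⟩ | ⟨h1, -, h3, -⟩
        · exact T.loopless.irrefl a h1
        · exact hux.ne (h1.symm.trans h2)
        · exact hux.ne (h2.symm.trans h1)
        · exact h3 h1
        · exact h3 h1
    have hNu : T'.neighborSet u = {x} := by
      ext b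
      simp only [SimpleGraph.mem_neighborSet, hadj, Set.mem_singleton_iff]
      constructor
      · rintro (⟨-, h2, -⟩ | ⟨-, h2⟩ | ⟨h1, -⟩ | ⟨h1, -, -, -⟩ | ⟨-, -, -, h4⟩)
        · exact absurd rfl h2
        · exact h2
        · exact absurd h1.symm hxu
        · exact absurd h1 huv
        · exact absurd h4 (T.loopless.irrefl u)
      · rintro rfl
        exact Or.inr (Or.inl (by simp))
    have hNvset : T'.neighborSet v = T.neighborSet v ∪ (T.neighborSet u \ {x}) := by
      ext b
      simp only [SimpleGraph.mem_neighborSet, hadj, Set.mem_union, Set.mem_diff,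
        Set.mem_singleton_iff]
      constructor
      · rintro (⟨h1, -, -⟩ | ⟨h1, -⟩ | ⟨h1, rfl⟩ | ⟨-, h2, -, h4⟩ | ⟨-, -, h3, -⟩)
        · exact Or.inl h1
        · exact absurd h1 (Ne.symm huv)
        · exact Or.inl (by rw [h1]; exact hux.symm)
        · exact Or.inr ⟨h4, h2⟩
        · exact absurd rfl h3
      · rintro (h | ⟨h1, h2⟩)
        · by_cases hbu : b = u
          · subst hbu
            by_cases hvx : v = x
            · exact Or.inr (Or.inr (Or.inl (by simp [hvx])))
            · exact absurd rfl (hA v h.symm hvx)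
          · exact Or.inl ⟨h, Ne.symm huv, hbu⟩
        · exact Or.inr (Or.inr (Or.inr (Or.inl ⟨trivial, h2, hA b h1 h2, h1⟩)))
    have hNdisj : Disjoint (T.neighborSet v) (T.neighborSet u \ {x}) := by
      rw [Set.disjoint_left]
      rintro y hy ⟨hy2, hy3⟩
      exact hB y hy2 hy3 hy
    have hxmem : x ∈ T.neighborSet u := hux
    have hNv : (T'.neighborSet v).ncard + 1 = (T.neighborSet v).ncard + (T.neighborSet u).ncard := by
      rw [hNvset, Set.ncard_union_eq hNdisj (Set.toFinite _) (Set.toFinite _)]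
      have := Set.ncard_diff_singleton_add_one hxmem (Set.toFinite _)
      omega
    have hNw : ∀ w, w ≠ u → w ≠ v → (T'.neighborSet w).ncard = (T.neighborSet w).ncard := by
      intro w hwu hwv
      by_cases hwx : w = x
      · subst hwx
        have hset : T'.neighborSet w = T.neighborSet w := by
          ext b
          simp only [SimpleGraph.mem_neighborSet, hadj]
          constructor
          · rintro (⟨h1, -, -⟩ | ⟨h1, -⟩ | ⟨-, rfl⟩ | ⟨h1, -, -, -⟩ | ⟨-, h2, -, -⟩)
            · exact h1
            · exact absurd h1 hxu
            · exact hux.symm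
            · exact absurd h1 hwv
            · exact absurd rfl h2
          · intro h
            by_cases hbu : b = u
            · exact Or.inr (Or.inr (Or.inl (by simp [hbu])))
            · exact Or.inl ⟨h, hxu, hbu⟩
        rw [hset]
      · by_cases hadju : T.Adj u w
        · have hset : T'.neighborSet w = insert v (T.neighborSet w \ {u}) := by
            ext b
            simp only [SimpleGraph.mem_neighborSet, hadj, Set.mem_insert_iff, Set.mem_diff,
              Set.mem_singleton_iff]
            constructor
            · rintro (⟨h1, -, h3⟩ | ⟨h1, -⟩ | ⟨h1, -⟩ | ⟨h1, -, -, -⟩ | ⟨h1, -, -, -⟩)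
              · exact Or.inr ⟨h1, h3⟩
              · exact absurd h1 hwu
              · exact absurd h1 hwx
              · exact absurd h1 hwv
              · exact Or.inl h1
            · rintro (rfl | ⟨h1, h2⟩)
              · exact Or.inr (Or.inr (Or.inr (Or.inr ⟨rfl, hwx, hwv, hadju⟩)))
              · exact Or.inl ⟨h1, hwu, h2⟩
          rw [hset]
          have humem : u ∈ T.neighborSet w := hadju.symm
          have hvnot : v ∉ T.neighborSet w \ {u} := by
            rintro ⟨hv1, -⟩
            exact hB w hadju hwx hv1.symm
          rw [Set.ncard_insert_of_notMem hvnot (Set.toFinite _)]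
          have := Set.ncard_diff_singleton_add_one humem (Set.toFinite _)
          omega
        · have hset : T'.neighborSet w = T.neighborSet w := by
            ext b
            simp only [SimpleGraph.mem_neighborSet, hadj]
            constructor
            · rintro (⟨h1, -, -⟩ | ⟨h1, -⟩ | ⟨h1, -⟩ | ⟨h1, -, -, -⟩ | ⟨-, -, -, h4⟩)
              · exact h1
              · exact absurd h1 hwu
              · exact absurd h1 hwx
              · exact absurd h1 hwv
              · exact absurd h4 hadju
            · intro h
              have hbu : b ≠ u := fun heq => hadju (heq ▸ h).symm
              exact Or.inl ⟨h, hwu, hbu⟩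
          rw [hset]
    have hmove : ∀ c, T.Adj u c → c ≠ v → G.Adj v c := by
      intro c hc hcv
      by_cases hcVi : c ∈ Vi
      · exact hclq v hvVi c hcVi (Ne.symm hcv)
      · exact (hnbr u huVi v hvVi c hcVi).mp (hTG hc)
    have hle : T' ≤ G := by
      intro a b hab
      rw [hadj] at hab
      rcases hab with ⟨h1, -, -⟩ | ⟨rfl, rfl⟩ | ⟨rfl, rfl⟩ | ⟨rfl, -, h3, h4⟩ | ⟨rfl, -, h3, h4⟩
      · exact hTG h1
      · exact hTG hux
      · exact (hTG hux).symm
      · exact hmove b h4 h3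
      · exact (hmove a h4 h3).symm
    have hqe : ∀ e ∈ q.edges, e ∈ T'.edgeSet := by
      intro e
      refine Sym2.ind (fun a b he => ?_) e
      rw [SimpleGraph.mem_edgeSet, hadj]
      have hab : T.Adj a b := q.edges_subset_edgeSet he
      have ha : a ≠ u := fun h => hqsup (h ▸ q.fst_mem_support_of_mem_edges he)
      have hb : b ≠ u := fun h => hqsup (h ▸ q.snd_mem_support_of_mem_edges he)
      exact Or.inl ⟨hab, ha, hb⟩
    have hruv : T'.Reachable u v :=
      (SimpleGraph.Walk.cons ((hadj u x).mpr (Or.inr (Or.inl ⟨rfl, rfl⟩)))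
        (q.transfer T' hqe)).reachable
    have hustep : ∀ b, T.Adj u b → T'.Reachable u b := by
      intro b hub
      by_cases hbx : b = x
      · subst hbx
        exact SimpleGraph.Adj.reachable ((hadj u b).mpr (Or.inr (Or.inl ⟨rfl, rfl⟩)))
      · exact hruv.trans (SimpleGraph.Adj.reachable ((hadj v b).mpr
          (Or.inr (Or.inr (Or.inr (Or.inl ⟨rfl, hbx, hA b hub hbx, hub⟩))))))
    have hstep : ∀ a b, T.Adj a b → T'.Reachable a b := by
      intro a b hab
      by_cases hau : a = u
      · subst hau
        exact hustep b hab
      · by_cases hbu : b = u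
        · subst hbu
          exact (hustep a hab.symm).symm
        · exact SimpleGraph.Adj.reachable ((hadj a b).mpr (Or.inl ⟨hab, hau, hbu⟩))
    have hconn' : T'.Connected := connected_of_adj_reachable htree.isConnected hstep
    have hsum : ∑ w, (T'.neighborSet w).ncard = ∑ w, (T.neighborSet w).ncard := by
      have hmem1 : u ∈ Finset.univ.erase v := Finset.mem_erase.mpr ⟨huv, Finset.mem_univ u⟩
      rw [← Finset.sum_erase_add Finset.univ _ (Finset.mem_univ v),
          ← Finset.sum_erase_add _ _ hmem1]
      conv_rhs => rw [← Finset.sum_erase_add Finset.univ _ (Finset.mem_univ v),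
          ← Finset.sum_erase_add _ _ hmem1]
      have hc : ∑ w ∈ (Finset.univ.erase v).erase u, (T'.neighborSet w).ncard
          = ∑ w ∈ (Finset.univ.erase v).erase u, (T.neighborSet w).ncard := by
        refine Finset.sum_congr rfl fun w hw => ?_
        obtain ⟨hwu, hw2⟩ := Finset.mem_erase.mp hw
        exact hNw w hwu (Finset.mem_erase.mp hw2).1
      have h1 : (T'.neighborSet u).ncard = 1 := by rw [hNu]; exact Set.ncard_singleton x
      rw [hc]
      omega
    have hecard : T'.edgeSet.ncard = T.edgeSet.ncard := by
      have h1 := handshake_ncard T'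
      have h2 := handshake_ncard T
      rw [hsum] at h1
      omega
    have htreecard := tree_edge_ncard htree
    have hT'tree : T'.IsTree := isTree_of_connected_of_card hconn' (by rw [hecard]; omega)
    have hNvsub : T.neighborSet v ⊆ T'.neighborSet v := by
      rw [hNvset]; exact Set.subset_union_left
    have hbr : branchSet T' = branchSet T \ {u} := by
      ext w
      simp only [branchSet, Set.mem_setOf_eq, Set.mem_diff, Set.mem_singleton_iff]
      by_cases hwu : w = u
      · subst hwu
        rw [hNu, Set.ncard_singleton]
        constructor
        · intro h; omega
        · rintro ⟨-, h⟩; exact absurd rfl h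
      · by_cases hwv : w = v
        · subst hwv
          have hge : 3 ≤ (T'.neighborSet w).ncard :=
            le_trans hvB3 (Set.ncard_le_ncard hNvsub (Set.toFinite _))
        
          exact ⟨fun _ => ⟨hvB3, hwu⟩, fun _ => hge⟩
        · rw [hNw w hwu hwv]
          exact ⟨fun h => ⟨h, hwu⟩, fun h => h.1⟩
    refine ⟨T', ⟨hle, hT'tree⟩, ?_, ?_⟩
    · have hint : branchSet T' ∩ Vi = (branchSet T ∩ Vi) \ {u} := by
        rw [hbr]
        ext w
        simp only [Set.mem_inter_iff, Set.mem_diff, Set.mem_singleton_iff]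
        tauto
      rw [hint]
      exact Set.ncard_diff_singleton_lt_of_mem hu (Set.toFinite _)
    · rw [hbr]
      exact Set.ncard_le_ncard Set.diff_subset (Set.toFinite _)
end

section
/- Let G = H(G_1,...,G_n) be a connected substitution graph and let T be a spanning tree of G with branch vertex set B satisfying |B ∩ V(G_i)| ≤ 1 for all i. Suppose each vertex of B ∩ V(G_i) has at most one fixed designated representative. For each i not containing a branch vertex, the edges of T with both endpoints in V(G_i) form a disjoint union of paths in G_i, and hence at least ham(G_i) vertices of V(G_i) have their T-parent (with respect to any rooting of T at a branch vertex) outside V(G_i). -/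
open SimpleGraph

variable {V : Type*}

section AuxStmt10

variable {W : Type*}

/-- The subgraph of `Gr` given by a connected component of a subgraph-graph `P ≤ Gr`. -/
def compSub {Gr : SimpleGraph W} (P : SimpleGraph W) (hle : P ≤ Gr)
    (c : P.ConnectedComponent) : Gr.Subgraph where
  verts := c.supp
  Adj a b := P.Adj a b ∧ a ∈ c.supp
  adj_sub h := hle h.1
  edge_vert h := h.2
  symm := by
    constructor
    rintro a b ⟨hab, ha⟩
    refine ⟨hab.symm, ?_⟩
    rw [SimpleGraph.ConnectedComponent.mem_supp_iff] at ha ⊢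
    rw [← ha]
    exact (SimpleGraph.ConnectedComponent.connectedComponentMk_eq_of_adj hab).symm

lemma compSub_reachable {Gr P : SimpleGraph W} (hle : P ≤ Gr) (c : P.ConnectedComponent)
    {u v : W} (w : P.Walk u v) (hu : u ∈ c.supp) :
    ∃ hv : v ∈ c.supp, (compSub P hle c).coe.Reachable ⟨u, hu⟩ ⟨v, hv⟩ := by
  induction w with
  | nil => exact ⟨hu, Reachable.refl _⟩
  | @cons a b v h w ih =>
    have hb : b ∈ c.supp := by
      rw [SimpleGraph.ConnectedComponent.mem_supp_iff] at hu ⊢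
      rw [← hu]
      exact (SimpleGraph.ConnectedComponent.connectedComponentMk_eq_of_adj h).symm
    obtain ⟨hv, hw⟩ := ih hb
    refine ⟨hv, Reachable.trans (SimpleGraph.Adj.reachable ?_) hw⟩
    rw [SimpleGraph.Subgraph.coe_adj]
    exact ⟨h, hu⟩

lemma compSub_connected {Gr P : SimpleGraph W} (hle : P ≤ Gr) (c : P.ConnectedComponent) :
    (compSub P hle c).Connected := by
  rw [SimpleGraph.Subgraph.connected_iff]
  constructor
  · constructor
    intro x y
    obtain ⟨u, hu⟩ := x
    obtain ⟨v, hv⟩ := y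
    have hres : P.Reachable u v := by
      refine SimpleGraph.ConnectedComponent.exact ?_
      have hu' : P.connectedComponentMk u = c := hu
      have hv' : P.connectedComponentMk v = c := hv
      rw [hu', hv']
    obtain ⟨w⟩ := hres
    obtain ⟨hv', hr⟩ := compSub_reachable hle c w hu
    exact hr
  · obtain ⟨v, hv⟩ := c.exists_rep
    exact ⟨v, (SimpleGraph.ConnectedComponent.mem_supp_iff c v).mpr hv⟩

lemma hasPathPartition_forest [Finite W] {Gr P : SimpleGraph W}
    (hle : P ≤ Gr) (hac : P.IsAcyclic) (hdeg : ∀ v, (P.neighborSet v).ncard ≤ 2) :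
    HasPathPartition Gr (Nat.card P.ConnectedComponent) := by
  classical
  let e := Finite.equivFin P.ConnectedComponent
  refine ⟨fun j => compSub P hle (e.symm j), fun j => ?_, fun v => ?_⟩
  · refine ⟨compSub_connected _ _, ?_, ?_⟩
    · intro u p hp
      let hom : (compSub P hle (e.symm j)).coe →g P := ⟨fun x => x.1, fun h => h.1⟩
      exact hac _ (hp.map (f := hom) Subtype.val_injective)
    · intro v
      have hsub : (compSub P hle (e.symm j)).neighborSet v ⊆ P.neighborSet v :=
        fun u hu => hu.1
      exact le_trans (Set.ncard_le_ncard hsub (Set.toFinite _)) (hdeg v)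
  · refine ⟨e (P.connectedComponentMk v), ?_, ?_⟩
    · show v ∈ (e.symm (e (P.connectedComponentMk v))).supp
      rw [Equiv.symm_apply_apply, SimpleGraph.ConnectedComponent.mem_supp_iff]
    · intro j hj
      have hj' : P.connectedComponentMk v = e.symm j :=
        (SimpleGraph.ConnectedComponent.mem_supp_iff _ _).mp hj
      rw [hj', Equiv.apply_symm_apply]

end AuxStmt10

theorem stmt10 {V : Type*} [Fintype V] (G : SimpleGraph V) (hG : G.Connected) (n : ℕ)
    (H : SimpleGraph (Fin n)) (f : V → Fin n)
    (hmod : ∀ u v, f u ≠ f v → (G.Adj u v ↔ H.Adj (f u) (f v)))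
    (T : SimpleGraph V) (hT : IsSpanningTree G T)
    (hB : ∀ i, (branchSet T ∩ f ⁻¹' {i}).Subsingleton)
    (r : V) (hr : r ∈ branchSet T)
    (par : V → V)
    (hpar : ∀ x, x ≠ r → T.Adj (par x) x ∧ T.dist (par x) r + 1 = T.dist x r)
    (i : Fin n) (hi : branchSet T ∩ f ⁻¹' {i} = ∅) :
    (T.induce (f ⁻¹' {i})).IsAcyclic ∧
    (∀ v : (f ⁻¹' {i} : Set V), ((T.induce (f ⁻¹' {i})).neighborSet v).ncard ≤ 2) ∧
    hamNum (G.induce (f ⁻¹' {i})) ≤ {v | f v = i ∧ f (par v) ≠ i}.ncard := by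
  classical
  set S : Set V := f ⁻¹' {i} with hS
  have hrS : ∀ v ∈ S, v ≠ r := by
    intro v hv hvr
    have hmem : r ∈ branchSet T ∩ S := ⟨hr, hvr ▸ hv⟩
    rw [hi] at hmem
    exact hmem
  have hTac : T.IsAcyclic := hT.2.IsAcyclic
  have h1 : (T.induce S).IsAcyclic := by
    intro u p hp
    exact hTac _ (hp.map (f := (SimpleGraph.Embedding.induce S (G := T)).toHom)
      (SimpleGraph.Embedding.induce S (G := T)).injective)
  have h2 : ∀ v : S, ((T.induce S).neighborSet v).ncard ≤ 2 := by
    intro v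
    have hnb : ¬ (3 ≤ (T.neighborSet (↑v : V)).ncard) := by
      intro h3
      have hmem : (↑v : V) ∈ branchSet T ∩ S := ⟨h3, v.2⟩
      rw [hi] at hmem
      exact hmem
    have himg : Subtype.val '' ((T.induce S).neighborSet v) ⊆ T.neighborSet (↑v : V) := by
      rintro _ ⟨u, hu, rfl⟩
      exact hu
    have hcard := Set.ncard_le_ncard himg (Set.toFinite _)
    rw [Set.ncard_image_of_injective _ Subtype.val_injective] at hcard
    omega
  refine ⟨h1, h2, ?_⟩
  have hle : (T.induce S) ≤ (G.induce S) := fun a b hab => hT.1 hab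
  have hpp := hasPathPartition_forest hle h1 h2
  refine le_trans (Nat.sInf_le hpp) ?_
  -- count components by entry vertices
  rw [← Nat.card_coe_set_eq]
  have hg : ∀ c : (T.induce S).ConnectedComponent,
      ∃ v : S, v ∈ c.supp ∧ T.dist ↑v r = sInf ((fun v : S => T.dist ↑v r) '' c.supp) := by
    intro c
    have hne : ((fun v : S => T.dist ↑v r) '' c.supp).Nonempty := by
      obtain ⟨v, hv⟩ := c.exists_rep
      exact ⟨_, ⟨v, (SimpleGraph.ConnectedComponent.mem_supp_iff c v).mpr hv, rfl⟩⟩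
    obtain ⟨v, hv, hd⟩ := Nat.sInf_mem hne
    exact ⟨v, hv, hd⟩
  choose g hg1 hg2 using hg
  have key : ∀ c, f (par ↑(g c)) ≠ i := by
    intro c hpc
    have hvS : (↑(g c) : V) ∈ S := (g c).2
    have hvr : (↑(g c) : V) ≠ r := hrS _ hvS
    obtain ⟨hadj, hdist⟩ := hpar _ hvr
    have hpS : par ↑(g c) ∈ S := hpc
    have hq : (⟨par ↑(g c), hpS⟩ : S) ∈ c.supp := by
      rw [SimpleGraph.ConnectedComponent.mem_supp_iff]
      have e1 : (T.induce S).connectedComponentMk (g c) = c := hg1 c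
      exact Eq.trans (SimpleGraph.ConnectedComponent.connectedComponentMk_eq_of_adj
        (show (T.induce S).Adj ⟨par ↑(g c), hpS⟩ (g c) from hadj)) e1
    have hle' : sInf ((fun v : S => T.dist ↑v r) '' c.supp) ≤ T.dist (par ↑(g c)) r :=
      Nat.sInf_le ⟨⟨par ↑(g c), hpS⟩, hq, rfl⟩
    have := hg2 c
    omega
  have hinj : Function.Injective
      (fun c : (T.induce S).ConnectedComponent =>
        (⟨↑(g c), ⟨(g c).2, key c⟩⟩ : {v | f v = i ∧ f (par v) ≠ i})) := by
    intro c1 c2 h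
    have hval : (↑(g c1) : V) = ↑(g c2) :=
      congrArg (Subtype.val (p := fun v => v ∈ {v | f v = i ∧ f (par v) ≠ i})) h
    have hgg : g c1 = g c2 := Subtype.ext hval
    have e1 : (T.induce S).connectedComponentMk (g c1) = c1 := hg1 c1
    have e2 : (T.induce S).connectedComponentMk (g c2) = c2 := hg1 c2
    rw [← e1, ← e2, hgg]
  exact Nat.card_le_card_of_injective _ hinj
end
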